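/- A formula φ(x;y) is an equation if and only if for all complete types p(x;y) and q(x;y) over ∅ with p ⟶ q, if φ(x,y) ∈ p then φ(x,y) ∈ q. -/

import Mathlib

set_option maxHeartbeats 1000000

open FirstOrder FirstOrder.Language Set

universe u v w

namespace Equationality

variable {L : FirstOrder.Language.{u, v}}

section Struc
variable {M : Type w} [L.Structure M]

/-- The instance of the formula `φ(x; y)` at the parameter tuple `b`. -/
def instSet {α β : Type*} (φ : L.Formula (α ⊕ β)) (b : β → M) : Set (α → M) :=
  {a | φ.Realize (Sum.elim a b)}

/-- A sequence of `γ`-tuples indexed by a linear order is indiscernible if any two strictly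
increasing finite subsequences satisfy the same formulas. -/
def IsIndiscernible {I : Type*} [LinearOrder I] {γ : Type*} (a : I → γ → M) : Prop :=
  ∀ (n : ℕ) (i j : Fin n → I), StrictMono i → StrictMono j →
    ∀ φ : L.Formula (Fin n × γ),
      φ.Realize (fun p => a (i p.1) p.2) ↔ φ.Realize (fun p => a (j p.1) p.2)

/-- The complete type of a tuple over `∅`, as the set of formulas it realizes. -/
def typeOf {γ : Type*} (a : γ → M) : Set (L.Formula γ) := {φ | φ.Realize a}

end Struc

variable (T : L.Theory)

/-- `φ(x; y)` is an equation for `T`: in every model of `T`, the family of finite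
intersections of instances of `φ` has the descending chain condition. -/
def IsEquation {α β : Type*} (φ : L.Formula (α ⊕ β)) : Prop :=
  ∀ (M : Theory.ModelType.{u, v, max u v} T) (B : ℕ → Finset (β → M)),
    (Antitone fun n => ⋂ b ∈ B n, instSet φ b) →
    ∃ N, ∀ n, N ≤ n → (⋂ b ∈ B n, instSet φ b) = ⋂ b ∈ B N, instSet φ b

/-- A complete type over `∅` (in the variables `γ`), presented as the set of formulas
realized by some tuple in some model of `T`. -/
def IsRealizedType {γ : Type*} (p : Set (L.Formula γ)) : Prop :=
  ∃ (M : Theory.ModelType.{u, v, max u v} T) (a : γ → M), typeOf a = p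

/-- `p ⟶ q`: there are a model of `T`, a tuple `b` and an indiscernible sequence `(aᵢ)`
with `aᵢ ⊨ p(x, b)` for `i > 0` and `a₀ ⊨ q(x, b)`. -/
def Pf {α β : Type*} (p q : Set (L.Formula (α ⊕ β))) : Prop :=
  ∃ (M : Theory.ModelType.{u, v, max u v} T) (b : β → M) (a : ℕ → α → M),
    IsIndiscernible (L := L) a ∧ (∀ i : ℕ, 0 < i → typeOf (Sum.elim (a i) b) = p) ∧
      typeOf (Sum.elim (a 0) b) = q

/-! ### Infinite Ramsey theorem -/

theorem pigeon {C : Type*} [Finite C] (f : ℕ → C) {S : Set ℕ} (hS : S.Infinite) :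
    ∃ k, {n ∈ S | f n = k}.Infinite := by
  by_contra h
  push_neg at h
  refine hS (Set.Finite.subset (Set.finite_iUnion h) ?_)
  exact fun n hn => mem_iUnion.2 ⟨f n, hn, rfl⟩

theorem ramsey {C : Type*} [Finite C] :
    ∀ (n : ℕ) (c : (Fin n → ℕ) → C) (S : Set ℕ), S.Infinite →
      ∃ H, H ⊆ S ∧ H.Infinite ∧ ∃ k, ∀ s : Fin n → ℕ, StrictMono s →
        (∀ i, s i ∈ H) → c s = k := by
  intro n
  induction n with
  | zero =>
    intro c S hS
    exact ⟨S, le_refl _, hS, c (fun i => i.elim0), fun s _ _ => by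
      congr 1; funext i; exact i.elim0⟩
  | succ n ih =>
    intro c S hS
    have key : ∀ S' : Set ℕ, S'.Infinite → ∃ H : Set ℕ, H ⊆ S' ∧ H.Infinite ∧
        (∀ x ∈ H, sInf S' < x) ∧ ∃ k, ∀ s : Fin n → ℕ, StrictMono s →
          (∀ i, s i ∈ H) → c (Fin.cons (sInf S') s) = k := by
      intro S' hS'
      set a := sInf S' with ha
      have htail : ({x ∈ S' | a < x}).Infinite := by
        have : {x ∈ S' | a < x} = S' \ Set.Iic a := by
          ext x
          simp only [Set.mem_sep_iff, Set.mem_diff, Set.mem_Iic, not_le]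
        rw [this]
        exact hS'.diff (Set.finite_Iic a)
      obtain ⟨H, hHsub, hHinf, k, hk⟩ := ih (fun s => c (Fin.cons a s)) _ htail
      exact ⟨H, fun x hx => (hHsub hx).1, hHinf, fun x hx => (hHsub hx).2, k, hk⟩
    classical
    let seq : ℕ → Set ℕ := fun m => Nat.rec S
      (fun _ S' => if h : S'.Infinite then (key S' h).choose else Set.univ) m
    have hseq0 : seq 0 = S := rfl
    have hseqsucc : ∀ m, seq (m + 1) =
        if h : (seq m).Infinite then (key (seq m) h).choose else Set.univ := fun m => rfl
    have hInf : ∀ m, (seq m).Infinite := by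
      intro m
      induction m with
      | zero => exact hS
      | succ m ihm =>
        rw [hseqsucc, dif_pos ihm]
        exact (key (seq m) ihm).choose_spec.2.1
    have hspec : ∀ m, seq (m+1) ⊆ seq m ∧ (∀ x ∈ seq (m+1), sInf (seq m) < x) ∧
        ∃ k, ∀ s : Fin n → ℕ, StrictMono s → (∀ i, s i ∈ seq (m+1)) →
          c (Fin.cons (sInf (seq m)) s) = k := by
      intro m
      have h1 : seq (m+1) = (key (seq m) (hInf m)).choose := by
        rw [hseqsucc, dif_pos (hInf m)]
      obtain ⟨u1, u2, u3, u4⟩ := (key (seq m) (hInf m)).choose_spec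
      rw [h1]
      exact ⟨u1, u3, u4⟩
    set A : ℕ → ℕ := fun m => sInf (seq m) with hA
    have hmem : ∀ m, A m ∈ seq m := fun m => Nat.sInf_mem (hInf m).nonempty
    have hmono : ∀ m m', m ≤ m' → seq m' ⊆ seq m := by
      intro m m' h
      induction h with
      | refl => exact le_refl _
      | step h ihm => exact le_trans (hspec _).1 ihm
    have hsubS : ∀ m, seq m ⊆ S := fun m => hseq0 ▸ hmono 0 m (Nat.zero_le m)
    have hAmono : StrictMono A := by
      refine strictMono_nat_of_lt_succ (fun m => ?_)
      exact (hspec m).2.1 _ (hmem (m+1))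
    choose K hK using fun m => (hspec m).2.2
    obtain ⟨k, hkinf⟩ := pigeon K Set.infinite_univ
    refine ⟨A '' {m | m ∈ Set.univ ∧ K m = k}, ?_, ?_, k, ?_⟩
    · rintro x ⟨m, _, rfl⟩
      exact hsubS m (hmem m)
    · exact hkinf.image (Set.injOn_of_injective hAmono.injective)
    · intro s hs hsH
      have hm : ∀ i, ∃ m, K m = k ∧ s i = A m := by
        intro i
        obtain ⟨m, hm1, hm2⟩ := hsH i
        exact ⟨m, hm1.2, hm2.symm⟩
      choose m hmk hms using hm
      have hmmono : StrictMono m := by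
        intro i j hij
        have := hs hij
        rw [hms i, hms j] at this
        exact hAmono.lt_iff_lt.1 this
      have hcons : s = Fin.cons (A (m 0)) (fun i : Fin n => A (m i.succ)) := by
        funext i
        refine Fin.cases ?_ ?_ i
        · simpa using hms 0
        · intro i; simpa using hms i.succ
      rw [hcons]
      have hin : ∀ i : Fin n, A (m i.succ) ∈ seq (m 0 + 1) := by
        intro i
        exact hmono (m 0 + 1) (m i.succ)
          (Nat.succ_le_of_lt (hmmono (Fin.succ_pos i))) (hmem (m i.succ))
      rw [hK (m 0) _ (fun i j hij => hAmono (hmmono (Fin.succ_lt_succ_iff.2 hij))) hin]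
      exact hmk 0

/-! ### Semantic glue lemmas -/

section Struc
variable {M : Type w} [L.Structure M]

lemma mem_typeOf {γ : Type*} (ψ : L.Formula γ) (a : γ → M) :
    ψ ∈ typeOf a ↔ ψ.Realize a := Iff.rfl

lemma isIndiscernible_comp {γ δ : Type*} {f : ℕ → γ → M} (hf : IsIndiscernible (L := L) f)
    {g : ℕ → ℕ} (hg : StrictMono g) (h : δ → γ) :
    IsIndiscernible (L := L) (fun i => f (g i) ∘ h) := by
  intro n i j hi hj ψ
  have := hf n (g ∘ i) (g ∘ j) (hg.comp hi) (hg.comp hj) (ψ.relabel (Prod.map id h))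
  simpa [Formula.realize_relabel, Function.comp_def, Prod.map] using this

lemma strictMono_pair {i j : ℕ} (h : i < j) : StrictMono ![i, j] := by
  intro a b hab
  fin_cases a <;> fin_cases b <;> simp_all [h]

lemma strictMono_fin_one (r : ℕ) : StrictMono (fun _ : Fin 1 => r) := by
  intro a b h
  exact absurd h (by simp [Subsingleton.elim a b])

lemma typeOf_pair_eq {α β : Type*} {f : ℕ → (α ⊕ β) → M} (hf : IsIndiscernible (L := L) f)
    {i j i' j' : ℕ} (hij : i < j) (hij' : i' < j') :
    typeOf (L := L) (Sum.elim (f j ∘ Sum.inl) (f i ∘ Sum.inr)) =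
      typeOf (Sum.elim (f j' ∘ Sum.inl) (f i' ∘ Sum.inr)) := by
  ext ψ
  have key : ∀ i j : ℕ, ψ.Realize (Sum.elim (f j ∘ Sum.inl) (f i ∘ Sum.inr)) ↔
      (ψ.relabel (Sum.elim (fun a => ((1 : Fin 2), Sum.inl a))
        (fun b => ((0 : Fin 2), Sum.inr b)))).Realize (fun p => f (![i, j] p.1) p.2) := by
    intro i j
    rw [Formula.realize_relabel]
    constructor <;> (intro hr; convert hr using 2; funext x; cases x <;> simp)
  rw [mem_typeOf, mem_typeOf, key i j, key i' j',
    hf 2 ![i, j] ![i', j'] (strictMono_pair hij) (strictMono_pair hij') _]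

end Struc

section Constants
variable {γ δ : Type*}

/-- The formula `ψ` instantiated at the constants given by `f`, as a sentence with
constants from `γ`. -/
noncomputable def sentAt (ψ : L.Formula δ) (f : δ → γ) : L[[γ]].Sentence :=
  Formula.equivSentence (ψ.relabel f)

lemma realize_sentAt {N : Type w} [L.Structure N] [L[[γ]].Structure N]
    [(L.lhomWithConstants γ).IsExpansionOn N] (ψ : L.Formula δ) (f : δ → γ) :
    (sentAt ψ f).Realize N ↔ ψ.Realize (fun d => (L.con (f d) : N)) := by
  rw [sentAt, Formula.realize_equivSentence, Formula.realize_relabel]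
  rfl

lemma realize_symm_sentAt {M : Type w} [L.Structure M] (ψ : L.Formula δ) (f : δ → γ)
    (v : γ → M) :
    (Formula.equivSentence.symm (sentAt ψ f)).Realize v ↔ ψ.Realize (v ∘ f) := by
  rw [sentAt, Equiv.symm_apply_apply, Formula.realize_relabel]

end Constants

/-- Compactness for a theory with added constants. -/
lemma satisfiable_withConstants {γ : Type (max u v)}
    (S : Set (L[[γ]].Sentence))
    (h : ∀ S₀ : Finset (L[[γ]].Sentence), ↑S₀ ⊆ S →
      ∃ (M : Type (max u v)) (_ : L.Structure M) (v : γ → M), Nonempty M ∧ M ⊨ T ∧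
        ∀ σ ∈ S₀, (Formula.equivSentence.symm σ).Realize v) :
    ((L.lhomWithConstants γ).onTheory T ∪ S).IsSatisfiable := by
  classical
  rw [Theory.isSatisfiable_iff_isFinitelySatisfiable]
  intro T₀ hT₀
  obtain ⟨M, instM, vc, hne, hmod, hreal⟩ :=
    h (T₀.filter (· ∈ S)) (fun σ hσ => (Finset.mem_filter.1 hσ).2)
  letI : (constantsOn γ).Structure M := constantsOn.structure vc
  haveI : M ⊨ T := hmod
  haveI : M ⊨ (T₀ : L[[γ]].Theory) := by
    rw [Theory.model_iff]
    intro σ hσ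
    rcases hT₀ hσ with hσ' | hσ'
    · obtain ⟨ψ₀, hψ₀, rfl⟩ := hσ'
      exact (LHom.realize_onSentence M (L.lhomWithConstants γ) ψ₀).2
        (Theory.realize_sentence_of_mem T hψ₀)
    · have := hreal σ (Finset.mem_filter.2 ⟨hσ, hσ'⟩)
      exact (Formula.realize_equivSentence_symm M σ vc).1 this
  exact Theory.Model.isSatisfiable M

section Formulas
variable {α β : Type*}

/-- `ρ_n(x_0,...,x_n) := ∃ c, (⋀_{i=1}^n φ(x_i, c)) ∧ ¬φ(x_0, c)` -/
noncomputable def rho [Finite β] (φ : L.Formula (α ⊕ β)) (n : ℕ) :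
    L.Formula (Fin (n + 1) × α) :=
  Formula.iExs β
    ((BoundedFormula.iInf (fun i : Fin n =>
        φ.relabel (Sum.elim (fun x : α => Sum.inl (i.succ, x)) Sum.inr))) ⊓
      (φ.relabel (Sum.elim (fun x : α => Sum.inl (0, x)) Sum.inr)).not)

lemma realize_rho [Finite β] {M : Type w} [L.Structure M] (φ : L.Formula (α ⊕ β)) (n : ℕ)
    (w : Fin (n + 1) → α → M) :
    (rho φ n).Realize (fun p => w p.1 p.2) ↔
      ∃ c : β → M, (∀ i : Fin n, φ.Realize (Sum.elim (w i.succ) c)) ∧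
        ¬ φ.Realize (Sum.elim (w 0) c) := by
  rw [rho, Formula.realize_iExs]
  refine exists_congr (fun c => ?_)
  have hfun : ∀ i : Fin (n + 1),
      (Sum.elim (fun p : Fin (n+1) × α => w p.1 p.2) c ∘
        (Sum.elim (fun x : α => Sum.inl (i, x)) Sum.inr)) = Sum.elim (w i) c := by
    intro i; funext x; cases x <;> rfl
  rw [Formula.realize_inf, Formula.realize_not, Formula.realize_relabel, hfun 0]
  refine and_congr ?_ Iff.rfl
  rw [Formula.Realize, BoundedFormula.realize_iInf]
  constructor
  · intro h i
    have := Formula.realize_relabel.1 (h i)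
    rwa [hfun i.succ] at this
  · intro h i
    exact Formula.realize_relabel.2 ((hfun i.succ).symm ▸ h i)

/-- `χ_k(y_0,...,y_{k+1}) := ∃ x, (⋀_{j=0}^k φ(x, y_j)) ∧ ¬φ(x, y_{k+1})` -/
noncomputable def chainFla [Finite α] (φ : L.Formula (α ⊕ β)) (k : ℕ) :
    L.Formula (Fin (k + 2) × β) :=
  Formula.iExs α
    ((BoundedFormula.iInf (fun j : Fin (k + 1) =>
        φ.relabel (Sum.elim Sum.inr (fun y : β => Sum.inl (j.castSucc, y))))) ⊓
      (φ.relabel (Sum.elim Sum.inr (fun y : β => Sum.inl (Fin.last (k + 1), y)))).not)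

lemma realize_chainFla [Finite α] {M : Type w} [L.Structure M] (φ : L.Formula (α ⊕ β)) (k : ℕ)
    (w : Fin (k + 2) → β → M) :
    (chainFla φ k).Realize (fun p => w p.1 p.2) ↔
      ∃ x : α → M, (∀ j : Fin (k + 1), φ.Realize (Sum.elim x (w j.castSucc))) ∧
        ¬ φ.Realize (Sum.elim x (w (Fin.last (k + 1)))) := by
  rw [chainFla, Formula.realize_iExs]
  refine exists_congr (fun x => ?_)
  have hfun : ∀ i : Fin (k + 2),
      (Sum.elim (fun p : Fin (k+2) × β => w p.1 p.2) x ∘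
        (Sum.elim Sum.inr (fun y : β => Sum.inl (i, y)))) = Sum.elim x (w i) := by
    intro i; funext z; cases z <;> rfl
  rw [Formula.realize_inf, Formula.realize_not, Formula.realize_relabel, hfun (Fin.last (k+1))]
  refine and_congr ?_ Iff.rfl
  rw [Formula.Realize, BoundedFormula.realize_iInf]
  constructor
  · intro h j
    have := Formula.realize_relabel.1 (h j)
    rwa [hfun j.castSucc] at this
  · intro h j
    exact Formula.realize_relabel.2 ((hfun j.castSucc).symm ▸ h j)

end Formulas

lemma exists_strictMono_extend {n m : ℕ} (h : n ≤ m) (i : Fin n → ℕ) (hi : StrictMono i) :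
    ∃ i' : Fin m → ℕ, StrictMono i' ∧ ∀ r : Fin n, i' (Fin.castLE h r) = i r := by
  classical
  have hmono : ∀ (a b : Fin n), a ≤ b → i a ≤ i b := fun a b hab => hi.monotone hab
  refine ⟨fun r => if hr : (r : ℕ) < n then i ⟨r, hr⟩ else
    (r : ℕ) + (if hn : 0 < n then i ⟨n - 1, by omega⟩ + 1 else 0), ?_, ?_⟩
  · intro a b hab
    have hab' : (a : ℕ) < (b : ℕ) := hab
    by_cases ha : (a : ℕ) < n <;> by_cases hb : (b : ℕ) < n
    · simp only [dif_pos ha, dif_pos hb]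
      exact hi (show (⟨a, ha⟩ : Fin n) < ⟨b, hb⟩ from hab')
    · simp only [dif_pos ha, dif_neg hb]
      have hn : 0 < n := Nat.pos_of_ne_zero (by omega)
      rw [dif_pos hn]
      have : i ⟨a, ha⟩ ≤ i ⟨n - 1, by omega⟩ := hmono _ _ (by simp [Fin.le_def]; omega)
      omega
    · omega
    · simp only [dif_neg ha, dif_neg hb]
      omega
  · intro r
    have hr : ((Fin.castLE h r : Fin m) : ℕ) < n := by
      simpa using r.isLt
    simp only [dif_pos hr]
    congr 1


lemma forward_dir {α β : Type (max u v)} [Finite α] [Finite β] (T : L.Theory)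
    (φ : L.Formula (α ⊕ β)) (hEq : IsEquation T φ) :
    ∀ p q : Set (L.Formula (α ⊕ β)), IsRealizedType T p → IsRealizedType T q →
      Pf T p q → φ ∈ p → φ ∈ q := by
  classical
  intro p q _ _ hpf hφp
  obtain ⟨M, b, a, hind, hpi, hq0⟩ := hpf
  have haφ : ∀ i : ℕ, 0 < i → φ.Realize (Sum.elim (a i) b) := by
    intro i hi
    have : φ ∈ typeOf (L := L) (Sum.elim (a i) b) := (hpi i hi).symm ▸ hφp
    exact this
  rw [← hq0, mem_typeOf]
  by_cases hcase : ∃ n : ℕ, ∀ c : β → M,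
      (∀ i : Fin n, φ.Realize (Sum.elim (a ((i : ℕ) + 1)) c)) → φ.Realize (Sum.elim (a 0) c)
  · obtain ⟨n, hn⟩ := hcase
    exact hn b (fun i => haφ _ (Nat.succ_pos _))
  · exfalso
    push_neg at hcase
    -- transfer along the indiscernible sequence
    have htrans : ∀ (j n : ℕ), ∃ c : β → M,
        (∀ i : Fin n, φ.Realize (Sum.elim (a (j + (i : ℕ) + 1)) c)) ∧
          ¬ φ.Realize (Sum.elim (a j) c) := by
      intro j n
      obtain ⟨c, hc1, hc2⟩ := hcase n
      have h1 : (rho φ n).Realize (fun p : Fin (n+1) × α => a ((p.1 : ℕ)) p.2) := by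
        rw [realize_rho φ n (fun r : Fin (n+1) => a (r : ℕ))]
        refine ⟨c, fun i => ?_, hc2⟩
        have : ((i.succ : Fin (n+1)) : ℕ) = (i : ℕ) + 1 := rfl
        rw [this]
        exact hc1 i
      have hmono1 : StrictMono (fun r : Fin (n+1) => (r : ℕ)) := fun r s h => h
      have hmono2 : StrictMono (fun r : Fin (n+1) => (r : ℕ) + j) := by
        intro r s h
        have h' : (r : ℕ) < (s : ℕ) := h
        show (r : ℕ) + j < (s : ℕ) + j
        omega
      have h2 := (hind (n+1) (fun r => (r : ℕ)) (fun r => (r : ℕ) + j)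
        hmono1 hmono2 (rho φ n)).1 h1
      rw [realize_rho φ n (fun r : Fin (n+1) => a ((r : ℕ) + j))] at h2
      obtain ⟨c', hc1', hc2'⟩ := h2
      refine ⟨c', fun i => ?_, by simpa using hc2'⟩
      have := hc1' i
      have hidx : ((i.succ : Fin (n+1)) : ℕ) + j = j + (i : ℕ) + 1 := by
        have : ((i.succ : Fin (n+1)) : ℕ) = (i : ℕ) + 1 := rfl
        omega
      rwa [hidx] at this
    -- the chain sentences
    set cmap : ∀ k : ℕ, Fin (k + 2) × β → ℕ × β := fun k p => ((p.1 : ℕ), p.2) with hcmap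
    set S : Set (L[[(ℕ × β : Type (max u v))]].Sentence) :=
      {x | ∃ k : ℕ, x = sentAt (chainFla φ k) (cmap k)} with hS
    have hfin : ∀ S₀ : Finset (L[[(ℕ × β : Type (max u v))]].Sentence), ↑S₀ ⊆ S →
        ∃ (Mf : Type (max u v)) (_ : L.Structure Mf) (vf : (ℕ × β : Type (max u v)) → Mf),
          Nonempty Mf ∧ Mf ⊨ T ∧ ∀ σ ∈ S₀, (Formula.equivSentence.symm σ).Realize vf := by
      intro S₀ hS₀
      have hk : ∀ σ ∈ S₀, ∃ k : ℕ, σ = sentAt (chainFla φ k) (cmap k) := fun σ hσ => hS₀ hσ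
      choose kf hkf using hk
      set m := S₀.attach.sup (fun σ => kf σ.1 σ.2) with hm
      choose cc hcc1 hcc2 using (fun j => htrans j (m + 1 - j))
      refine ⟨M, inferInstance, fun rg => cc (min rg.1 (m+1)) rg.2, inferInstance,
        M.is_model, ?_⟩
      intro σ hσ
      rw [hkf σ hσ, realize_symm_sentAt]
      have hkm : kf σ hσ ≤ m := Finset.le_sup (f := fun σ => kf σ.1 σ.2)
        (Finset.mem_attach S₀ ⟨σ, hσ⟩)
      set k := kf σ hσ with hkdef
      refine (realize_chainFla φ k (fun r : Fin (k+2) => cc (min (r : ℕ) (m+1)))).2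
        ⟨a (k + 1), fun j => ?_, ?_⟩
      · have hjlt : (j : ℕ) < k + 1 := j.isLt
        have hval : ((j.castSucc : Fin (k+2)) : ℕ) = (j : ℕ) := rfl
        have hmin : min ((j.castSucc : Fin (k+2)) : ℕ) (m+1) = (j : ℕ) := by
          rw [hval]; omega
        rw [hmin]
        have := hcc1 (j : ℕ) ⟨k - (j : ℕ), by omega⟩
        have hidx : (j : ℕ) + (k - (j : ℕ)) + 1 = k + 1 := by omega
        rwa [hidx] at this
      · have hval : ((Fin.last (k+1) : Fin (k+2)) : ℕ) = k + 1 := rfl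
        have hmin : min ((Fin.last (k+1) : Fin (k+2)) : ℕ) (m+1) = k + 1 := by
          rw [hval]; omega
        rw [hmin]
        exact hcc2 (k + 1)
    have hsat := satisfiable_withConstants T S hfin
    -- unpack the model
    obtain ⟨M'⟩ := hsat
    letI : L.Structure M' := (L.lhomWithConstants (ℕ × β : Type (max u v))).reduct M'
    haveI : (L.lhomWithConstants (ℕ × β : Type (max u v))).IsExpansionOn
        (M' : Type (max u v)) := LHom.isExpansionOn_reduct _ _
    haveI hMT : (M' : Type (max u v)) ⊨ T := by
      have hmod : (M' : Type (max u v)) ⊨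
          (L.lhomWithConstants (ℕ × β : Type (max u v))).onTheory T :=
        M'.is_model.mono Set.subset_union_left
      exact (LHom.onTheory_model (L.lhomWithConstants _) T).1 hmod
    have hσ : ∀ k : ℕ, ∃ x : α → M',
        (∀ j : Fin (k+1), φ.Realize (Sum.elim x (fun y => (L.con (((j : ℕ), y) : ℕ × β) : M')))) ∧
          ¬ φ.Realize (Sum.elim x (fun y => (L.con ((k + 1, y) : ℕ × β) : M'))) := by
      intro k
      have hmem : sentAt (chainFla φ k) (cmap k) ∈
          (L.lhomWithConstants (ℕ × β : Type (max u v))).onTheory T ∪ S :=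
        Set.mem_union_right _ ⟨k, rfl⟩
      have hreal := Theory.realize_sentence_of_mem
        ((L.lhomWithConstants (ℕ × β : Type (max u v))).onTheory T ∪ S) hmem
        (M := (M' : Type (max u v)))
      have hreal2 := (realize_sentAt (chainFla φ k) (cmap k)).1 hreal
      have hreal3 := (realize_chainFla φ k
        (fun (r : Fin (k+2)) (y : β) => (L.con (((r : ℕ), y) : ℕ × β) : M'))).1 hreal2
      obtain ⟨x, h1, h2⟩ := hreal3
      exact ⟨x, fun j => h1 j, h2⟩
    -- contradiction with IsEquation
    let NT : Theory.ModelType.{u, v, max u v} T :=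
      { Carrier := M', struc := inferInstance, is_model := hMT, nonempty' := inferInstance }
    let d : ℕ → β → NT := fun k y => (L.con ((k, y) : ℕ × β) : M')
    let B : ℕ → Finset (β → NT) := fun n => (Finset.range (n+1)).image d
    have hBmem : ∀ n (bb : β → NT), bb ∈ B n ↔ ∃ k ≤ n, d k = bb := by
      intro n bb
      simp only [B, Finset.mem_image, Finset.mem_range]
      constructor
      · rintro ⟨k, hk, rfl⟩; exact ⟨k, by omega, rfl⟩
      · rintro ⟨k, hk, rfl⟩; exact ⟨k, by omega, rfl⟩
    have hBanti : Antitone (fun n => ⋂ bb ∈ B n, instSet φ bb) := by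
      intro n n' h
      intro x hx
      simp only [Set.mem_iInter] at hx ⊢
      intro bb hbb
      obtain ⟨k, hk, rfl⟩ := (hBmem n bb).1 hbb
      exact hx _ ((hBmem n' (d k)).2 ⟨k, by omega, rfl⟩)
    obtain ⟨N₀, hN₀⟩ := hEq NT B hBanti
    obtain ⟨x, hx1, hx2⟩ := hσ N₀
    have hxin : x ∈ ⋂ bb ∈ B N₀, instSet φ bb := by
      simp only [Set.mem_iInter]
      intro bb hbb
      obtain ⟨k, hk, rfl⟩ := (hBmem N₀ bb).1 hbb
      have := hx1 ⟨k, by omega⟩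
      exact this
    have hxin' : x ∈ ⋂ bb ∈ B (N₀ + 1), instSet φ bb := by
      rw [hN₀ (N₀ + 1) (Nat.le_succ N₀)]
      exact hxin
    simp only [Set.mem_iInter] at hxin'
    exact hx2 (hxin' (d (N₀+1)) ((hBmem (N₀+1) (d (N₀+1))).2 ⟨N₀+1, le_refl _, rfl⟩))

section PairFla
variable {α β : Type*}

/-- `φ(x₁, y₀)` as a formula in two `(α ⊕ β)`-tuples of variables. -/
def pairFla (φ : L.Formula (α ⊕ β)) : L.Formula (Fin 2 × (α ⊕ β)) :=
  φ.relabel (Sum.elim (fun x : α => ((1 : Fin 2), Sum.inl x))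
    (fun y : β => ((0 : Fin 2), Sum.inr y)))

lemma realize_pairFla {M : Type w} [L.Structure M] (φ : L.Formula (α ⊕ β))
    (g : Fin 2 → (α ⊕ β) → M) :
    (pairFla φ).Realize (fun p => g p.1 p.2) ↔
      φ.Realize (Sum.elim (g 1 ∘ Sum.inl) (g 0 ∘ Sum.inr)) := by
  rw [pairFla, Formula.realize_relabel]
  constructor <;> (intro hr; convert hr using 2; funext x; cases x <;> simp)

/-- `φ(x₀, y₀)` as a formula in one `(α ⊕ β)`-tuple of variables. -/
def diagFla (φ : L.Formula (α ⊕ β)) : L.Formula (Fin 1 × (α ⊕ β)) :=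
  φ.relabel (fun z : α ⊕ β => ((0 : Fin 1), z))

lemma realize_diagFla {M : Type w} [L.Structure M] (φ : L.Formula (α ⊕ β))
    (g : Fin 1 → (α ⊕ β) → M) :
    (diagFla φ).Realize (fun p => g p.1 p.2) ↔ φ.Realize (g 0) := by
  rw [diagFla, Formula.realize_relabel]
  exact Iff.rfl

end PairFla

lemma backward_dir {α β : Type (max u v)} [Finite α] [Finite β] (T : L.Theory)
    (φ : L.Formula (α ⊕ β))
    (hcl : ∀ p q : Set (L.Formula (α ⊕ β)), IsRealizedType T p → IsRealizedType T q →
      Pf T p q → φ ∈ p → φ ∈ q) : IsEquation T φ := by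
  classical
  intro M B hBanti
  by_contra hns
  push_neg at hns
  set X : ℕ → Set (α → M) := fun n => ⋂ bb ∈ B n, instSet φ bb with hX
  have hns' : ∀ N, ∃ n, N ≤ n ∧ X n ≠ X N := hns
  let nk : ℕ → ℕ := fun k => Nat.rec 0 (fun _ prev => (hns' prev).choose) k
  have hnkstep : ∀ k, nk k ≤ nk (k+1) ∧ X (nk (k+1)) ≠ X (nk k) := by
    intro k
    exact ⟨(hns' (nk k)).choose_spec.1, (hns' (nk k)).choose_spec.2⟩
  have hnkmono : Monotone nk := monotone_nat_of_le_succ (fun k => (hnkstep k).1)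
  have hpoint : ∀ k, ∃ zz : α → M, zz ∈ X (nk k) ∧ zz ∉ X (nk (k+1)) := by
    intro k
    by_contra h
    push_neg at h
    refine (hnkstep k).2 (Set.Subset.antisymm (hBanti (hnkstep k).1) h)
  choose z hz1 hz2 using hpoint
  have hbb : ∀ k, ∃ bb ∈ B (nk (k+1)), ¬ φ.Realize (Sum.elim (z k) bb) := by
    intro k
    by_contra h
    push_neg at h
    refine hz2 k ?_
    simp only [hX, Set.mem_iInter]
    exact fun bb hbbmem => h bb hbbmem
  choose bb hbbmem hbbneg using hbb
  have harr : ∀ j k : ℕ, j < k → φ.Realize (Sum.elim (z k) (bb j)) := by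
    intro j k hjk
    have hzk : z k ∈ X (nk (j+1)) := hBanti (hnkmono (show j+1 ≤ k from hjk)) (hz1 k)
    simp only [hX, Set.mem_iInter] at hzk
    exact hzk (bb j) (hbbmem j)
  set e : ℕ → (α ⊕ β) → M := fun k => Sum.elim (z k) (bb k) with he
  -- the theory with constants
  set Sind : Set (L[[(ℕ × (α ⊕ β) : Type (max u v))]].Sentence) :=
    {x | ∃ (n : ℕ) (ψ : L.Formula (Fin n × (α ⊕ β))) (i j : Fin n → ℕ),
      StrictMono i ∧ StrictMono j ∧
      x = (sentAt ψ (fun p => (i p.1, p.2))).iff (sentAt ψ (fun p => (j p.1, p.2)))} with hSind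
  set Sem : Set (L[[(ℕ × (α ⊕ β) : Type (max u v))]].Sentence) :=
    {x | ∃ (n : ℕ) (ψ : L.Formula (Fin n × (α ⊕ β))) (i : Fin n → ℕ), StrictMono i ∧
      (∀ s : Fin n → ℕ, StrictMono s → ψ.Realize (fun p => e (s p.1) p.2)) ∧
      x = sentAt ψ (fun p => (i p.1, p.2))} with hSem
  have hfin : ∀ S₀ : Finset (L[[(ℕ × (α ⊕ β) : Type (max u v))]].Sentence),
      ↑S₀ ⊆ Sind ∪ Sem →
      ∃ (Mf : Type (max u v)) (_ : L.Structure Mf) (vf : (ℕ × (α ⊕ β) : Type (max u v)) → Mf),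
        Nonempty Mf ∧ Mf ⊨ T ∧ ∀ σ ∈ S₀, (Formula.equivSentence.symm σ).Realize vf := by
    intro S₀ hS₀
    have hdata : ∀ σ : {x // x ∈ S₀}, ∃ d : (Σ n : ℕ, L.Formula (Fin n × (α ⊕ β))),
        (∃ i j : Fin d.1 → ℕ, StrictMono i ∧ StrictMono j ∧
          σ.1 = (sentAt d.2 (fun p => (i p.1, p.2))).iff
            (sentAt d.2 (fun p => (j p.1, p.2)))) ∨
        (∃ i : Fin d.1 → ℕ, StrictMono i ∧
          (∀ s : Fin d.1 → ℕ, StrictMono s → d.2.Realize (fun p => e (s p.1) p.2)) ∧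
          σ.1 = sentAt d.2 (fun p => (i p.1, p.2))) := by
      rintro ⟨σ, hσ⟩
      rcases hS₀ hσ with h | h
      · obtain ⟨n, ψ, i, j, hi, hj, rfl⟩ := h
        exact ⟨⟨n, ψ⟩, Or.inl ⟨i, j, hi, hj, rfl⟩⟩
      · obtain ⟨n, ψ, i, hi, hall, rfl⟩ := h
        exact ⟨⟨n, ψ⟩, Or.inr ⟨i, hi, hall, rfl⟩⟩
    choose d hd using hdata
    set m := S₀.attach.sup (fun σ => (d σ).1) with hm
    have hdm : ∀ σ, (d σ).1 ≤ m := fun σ =>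
      Finset.le_sup (f := fun σ => (d σ).1) (Finset.mem_attach _ σ)
    set pad : ∀ σ : {x // x ∈ S₀}, L.Formula (Fin m × (α ⊕ β)) :=
      fun σ => (d σ).2.relabel (Prod.map (Fin.castLE (hdm σ)) id) with hpad
    set col : (Fin m → ℕ) → ({x // x ∈ S₀} → Bool) :=
      fun s σ => decide ((pad σ).Realize (fun p => e (s p.1) p.2)) with hcoldef
    obtain ⟨H, _, Hinf, colk, hcol⟩ := ramsey m col Set.univ Set.infinite_univ
    set nth : ℕ → ℕ := Nat.nth (· ∈ H) with hnth
    have hnthmono : StrictMono nth := Nat.nth_strictMono Hinf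
    have hnthmem : ∀ r, nth r ∈ H := fun r => Nat.nth_mem_of_infinite Hinf r
    refine ⟨M, inferInstance, fun rg => e (nth rg.1) rg.2, inferInstance, M.is_model, ?_⟩
    intro σ hσ
    have keyr : ∀ (i : Fin (d ⟨σ, hσ⟩).1 → ℕ), StrictMono i →
        ((d ⟨σ, hσ⟩).2.Realize (fun p => e (nth (i p.1)) p.2) ↔ colk ⟨σ, hσ⟩ = true) := by
      intro i hi
      obtain ⟨i', hi', hie⟩ := exists_strictMono_extend (hdm ⟨σ, hσ⟩) i hi
      have hc := hcol (nth ∘ i') (hnthmono.comp hi') (fun r => hnthmem (i' r))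
      have hc' := congrFun hc ⟨σ, hσ⟩
      have hpadiff : (pad ⟨σ, hσ⟩).Realize
          (fun p : Fin m × (α ⊕ β) => e (nth (i' p.1)) p.2) ↔
          (d ⟨σ, hσ⟩).2.Realize (fun p => e (nth (i p.1)) p.2) := by
        rw [hpad, Formula.realize_relabel]
        have hcomp : ((fun p : Fin m × (α ⊕ β) => e (nth (i' p.1)) p.2) ∘
            (Prod.map (Fin.castLE (hdm ⟨σ, hσ⟩)) id)) =
            (fun p : Fin (d ⟨σ, hσ⟩).1 × (α ⊕ β) => e (nth (i p.1)) p.2) := by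
          funext p
          show e (nth (i' (Fin.castLE (hdm ⟨σ, hσ⟩) p.1))) p.2 = e (nth (i p.1)) p.2
          rw [hie p.1]
        rw [hcomp]
      rw [← hpadiff]
      have : col (nth ∘ i') ⟨σ, hσ⟩ =
          decide ((pad ⟨σ, hσ⟩).Realize (fun p : Fin m × (α ⊕ β) => e (nth (i' p.1)) p.2)) :=
        rfl
      rw [this] at hc'
      rw [← hc', decide_eq_true_eq]
    rcases hd ⟨σ, hσ⟩ with ⟨i, j, hi, hj, heq⟩ | ⟨i, hi, hall, heq⟩
    · replace heq : σ = (sentAt (d ⟨σ, hσ⟩).2 (fun p => (i p.1, p.2))).iff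
          (sentAt (d ⟨σ, hσ⟩).2 (fun p => (j p.1, p.2))) := heq
      rw [heq]
      have hiffeq : (Formula.equivSentence.symm
          ((sentAt (d ⟨σ, hσ⟩).2 (fun p => (i p.1, p.2))).iff
            (sentAt (d ⟨σ, hσ⟩).2 (fun p => (j p.1, p.2))))) =
          (Formula.equivSentence.symm (sentAt (d ⟨σ, hσ⟩).2 (fun p => (i p.1, p.2)))).iff
            (Formula.equivSentence.symm (sentAt (d ⟨σ, hσ⟩).2 (fun p => (j p.1, p.2)))) := rfl
      rw [hiffeq, Formula.realize_iff, realize_symm_sentAt, realize_symm_sentAt]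
      exact (keyr i hi).trans (keyr j hj).symm
    · replace heq : σ = sentAt (d ⟨σ, hσ⟩).2 (fun p => (i p.1, p.2)) := heq
      rw [heq, realize_symm_sentAt]
      exact hall (nth ∘ i) (hnthmono.comp hi)
  have hsat := satisfiable_withConstants T (Sind ∪ Sem) hfin
  obtain ⟨M'⟩ := hsat
  letI : L.Structure M' := (L.lhomWithConstants (ℕ × (α ⊕ β) : Type (max u v))).reduct M'
  haveI : (L.lhomWithConstants (ℕ × (α ⊕ β) : Type (max u v))).IsExpansionOn
      (M' : Type (max u v)) := LHom.isExpansionOn_reduct _ _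
  haveI hMT : (M' : Type (max u v)) ⊨ T := by
    have hmod : (M' : Type (max u v)) ⊨
        (L.lhomWithConstants (ℕ × (α ⊕ β) : Type (max u v))).onTheory T :=
      M'.is_model.mono Set.subset_union_left
    exact (LHom.onTheory_model (L.lhomWithConstants _) T).1 hmod
  set f : ℕ → (α ⊕ β) → M' := fun r g => (L.con ((r, g) : ℕ × (α ⊕ β)) : M') with hf
  have hIndf : IsIndiscernible (L := L) f := by
    intro n i j hi hj ψ
    have hmem : (sentAt ψ (fun p => (i p.1, p.2))).iff (sentAt ψ (fun p => (j p.1, p.2))) ∈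
        (L.lhomWithConstants (ℕ × (α ⊕ β) : Type (max u v))).onTheory T ∪ (Sind ∪ Sem) :=
      Set.mem_union_right _ (Set.mem_union_left _ ⟨n, ψ, i, j, hi, hj, rfl⟩)
    have hreal := Theory.realize_sentence_of_mem
      ((L.lhomWithConstants (ℕ × (α ⊕ β) : Type (max u v))).onTheory T ∪ (Sind ∪ Sem)) hmem
      (M := (M' : Type (max u v)))
    have hiff := Formula.realize_iff.1 hreal
    exact Iff.trans (Iff.symm (realize_sentAt ψ (fun p => (i p.1, p.2))))
      (Iff.trans hiff (realize_sentAt ψ (fun p => (j p.1, p.2))))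
  have hEMf : ∀ (n : ℕ) (ψ : L.Formula (Fin n × (α ⊕ β))),
      (∀ s : Fin n → ℕ, StrictMono s → ψ.Realize (fun p => e (s p.1) p.2)) →
      ∀ i : Fin n → ℕ, StrictMono i → ψ.Realize (fun p => f (i p.1) p.2) := by
    intro n ψ hall i hi
    have hmem : sentAt ψ (fun p => (i p.1, p.2)) ∈
        (L.lhomWithConstants (ℕ × (α ⊕ β) : Type (max u v))).onTheory T ∪ (Sind ∪ Sem) :=
      Set.mem_union_right _ (Set.mem_union_right _ ⟨n, ψ, i, hi, hall, rfl⟩)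
    have hreal := Theory.realize_sentence_of_mem
      ((L.lhomWithConstants (ℕ × (α ⊕ β) : Type (max u v))).onTheory T ∪ (Sind ∪ Sem)) hmem
      (M := (M' : Type (max u v)))
    exact (realize_sentAt ψ _).1 hreal
  have hallpair : ∀ s : Fin 2 → ℕ, StrictMono s →
      (pairFla φ).Realize (fun p => e (s p.1) p.2) := by
    intro s hs
    exact (realize_pairFla φ (fun r => e (s r))).2
      (harr (s 0) (s 1) (hs (show (0 : Fin 2) < 1 by norm_num)))
  have halldiag : ∀ s : Fin 1 → ℕ, StrictMono s →
      ((diagFla φ).not).Realize (fun p => e (s p.1) p.2) := by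
    intro s _
    rw [Formula.realize_not, realize_diagFla φ (fun r => e (s r))]
    exact hbbneg (s 0)
  have hfpos : ∀ r r' : ℕ, r < r' → φ.Realize (Sum.elim (f r' ∘ Sum.inl) (f r ∘ Sum.inr)) := by
    intro r r' h
    have := hEMf 2 (pairFla φ) hallpair ![r, r'] (strictMono_pair h)
    exact (realize_pairFla φ (fun t => f (![r, r'] t))).1 this
  have hfneg : ∀ r : ℕ, ¬ φ.Realize (f r) := by
    intro r
    have := hEMf 1 ((diagFla φ).not) halldiag (fun _ => r) (strictMono_fin_one r)
    rw [Formula.realize_not, realize_diagFla φ (fun t => f ((fun _ : Fin 1 => r) t))] at this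
    exact this
  -- assemble the Pf witness
  let NT : Theory.ModelType.{u, v, max u v} T :=
    { Carrier := M', struc := inferInstance, is_model := hMT, nonempty' := inferInstance }
  let bN : β → NT := f 1 ∘ Sum.inr
  let aN : ℕ → α → NT := fun i => f (i + 1) ∘ Sum.inl
  have haind : IsIndiscernible (L := L) aN :=
    isIndiscernible_comp hIndf (fun _ _ h => by omega) Sum.inl
  have hPf : Pf T (typeOf (L := L) (Sum.elim (aN 1) bN)) (typeOf (L := L) (Sum.elim (aN 0) bN)) := by
    refine ⟨NT, bN, aN, haind, fun i hi => ?_, rfl⟩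
    exact typeOf_pair_eq hIndf (show 1 < i + 1 by omega) (show 1 < 1 + 1 by omega)
  have hφpp : φ ∈ typeOf (L := L) (Sum.elim (aN 1) bN) := hfpos 1 2 (by omega)
  have hφqq : φ ∉ typeOf (L := L) (Sum.elim (aN 0) bN) := by
    intro hmem
    have hrl : φ.Realize (Sum.elim (f 1 ∘ Sum.inl) (f 1 ∘ Sum.inr)) := hmem
    have heq2 : Sum.elim (f 1 ∘ Sum.inl) (f 1 ∘ Sum.inr) = f 1 := by
      funext x; cases x <;> rfl
    rw [heq2] at hrl
    exact hfneg 1 hrl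
  exact hφqq (hcl _ _ ⟨NT, _, rfl⟩ ⟨NT, _, rfl⟩ hPf hφpp)

/-- A formula `φ(x; y)` is an equation if and only if for all complete types
`p(x; y)` and `q(x; y)` over `∅` with `p ⟶ q`, if `φ(x, y) ∈ p` then `φ(x, y) ∈ q`. -/
theorem isEquation_iff_pf_closed {α β : Type (max u v)} [Finite α] [Finite β]
    (hT : T.IsComplete) (φ : L.Formula (α ⊕ β)) :
    IsEquation T φ ↔
      ∀ p q : Set (L.Formula (α ⊕ β)), IsRealizedType T p → IsRealizedType T q →
        Pf T p q → φ ∈ p → φ ∈ q :=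
  ⟨fun h => forward_dir T φ h, fun h => backward_dir T φ h⟩

end Equationality
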